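/- Let B ∈ ℝ^{p×m}, b : ℝ^q → ℝ^p, f : ℝ^m → ℝ, g : ℝ^q → ℝ, and let R ∈ ℝ^{p×p} be symmetric positive definite. Let (u†, x†, y†) satisfy b(u†) + B x† = 0, g(u†) + (y†)ᵀ b(u†) ≤ g(u) + (y†)ᵀ b(u) for all u, and f(x†) + (y†)ᵀ B x† ≤ f(x) + (y†)ᵀ B x for all x. Let x, x⁺ ∈ ℝ^m, u⁺ ∈ ℝ^q, y⁺ ∈ ℝ^p with r⁺ = b(u⁺) + B x⁺, and suppose (a) g(u⁺) + (y⁺ + R B (x − x⁺))ᵀ b(u⁺) ≤ g(u†) + (y⁺ + R B (x − x⁺))ᵀ b(u†) and (b) f(x⁺) + (y⁺)ᵀ B x⁺ ≤ f(ξ) + (y⁺)ᵀ B ξ for all ξ ∈ ℝ^m. Then (y⁺ − y†)ᵀ r⁺ − (x⁺ − x)ᵀ Bᵀ R r⁺ + (x⁺ − x)ᵀ Bᵀ R B (x⁺ − x†) ≤ 0. -/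

import Mathlib

open Matrix

/-- Under the saddle hypotheses on `(u†, x†, y†)` and the update
hypotheses (a), (b), with `r⁺ = b(u⁺) + B x⁺`,
`(y⁺ − y†)ᵀ r⁺ − (x⁺ − x)ᵀ Bᵀ R r⁺ + (x⁺ − x)ᵀ Bᵀ R B (x⁺ − x†) ≤ 0`. -/
theorem stmt6 {p m q : ℕ} (B : Matrix (Fin p) (Fin m) ℝ)
    (b : (Fin q → ℝ) → Fin p → ℝ) (f : (Fin m → ℝ) → ℝ) (g : (Fin q → ℝ) → ℝ)
    (R : Matrix (Fin p) (Fin p) ℝ) (hR : R.PosDef)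
    (udag : Fin q → ℝ) (xdag : Fin m → ℝ) (ydag : Fin p → ℝ)
    (hfeas : b udag + B.mulVec xdag = 0)
    (hgdag : ∀ u : Fin q → ℝ, g udag + ydag ⬝ᵥ b udag ≤ g u + ydag ⬝ᵥ b u)
    (hfdag : ∀ x : Fin m → ℝ,
      f xdag + ydag ⬝ᵥ B.mulVec xdag ≤ f x + ydag ⬝ᵥ B.mulVec x)
    (x xplus : Fin m → ℝ) (uplus : Fin q → ℝ) (yplus : Fin p → ℝ)
    (rplus : Fin p → ℝ) (hr : rplus = b uplus + B.mulVec xplus)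
    (ha : g uplus + (yplus + R.mulVec (B.mulVec (x - xplus))) ⬝ᵥ b uplus ≤
          g udag + (yplus + R.mulVec (B.mulVec (x - xplus))) ⬝ᵥ b udag)
    (hb : ∀ ξ : Fin m → ℝ,
      f xplus + yplus ⬝ᵥ B.mulVec xplus ≤ f ξ + yplus ⬝ᵥ B.mulVec ξ) :
    (yplus - ydag) ⬝ᵥ rplus - (xplus - x) ⬝ᵥ Bᵀ.mulVec (R.mulVec rplus)
      + (xplus - x) ⬝ᵥ Bᵀ.mulVec (R.mulVec (B.mulVec (xplus - xdag))) ≤ 0 := by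
  have key : ∀ (v : Fin m → ℝ) (w : Fin p → ℝ),
      R.mulVec (B.mulVec v) ⬝ᵥ w = v ⬝ᵥ Bᵀ.mulVec (R.mulVec w) := by
    have hRs : Rᵀ = R := by have h := hR.isHermitian; simp at h; exact h
    intro v w
    calc R.mulVec (B.mulVec v) ⬝ᵥ w
        = w ⬝ᵥ R.mulVec (B.mulVec v) := dotProduct_comm _ _
      _ = (Rᵀ.mulVec w) ⬝ᵥ (B.mulVec v) := by
          rw [Matrix.dotProduct_mulVec, Matrix.mulVec_transpose]
      _ = (R.mulVec w) ⬝ᵥ (B.mulVec v) := by rw [hRs]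
      _ = (Bᵀ.mulVec (R.mulVec w)) ⬝ᵥ v := by
          rw [Matrix.dotProduct_mulVec, Matrix.mulVec_transpose]
      _ = v ⬝ᵥ Bᵀ.mulVec (R.mulVec w) := dotProduct_comm _ _
  have hbu : b udag = -(B.mulVec xdag) := eq_neg_of_add_eq_zero_left hfeas
  subst hr
  have h1 := hgdag uplus
  have h2 := ha
  have h3 := hb xdag
  have h4 := hfdag xplus
  rw [hbu] at h1 h2
  simp only [Matrix.mulVec_sub, Matrix.mulVec_add, dotProduct_add, add_dotProduct,
    dotProduct_sub, sub_dotProduct, dotProduct_neg, neg_dotProduct] at h1 h2 h3 h4 ⊢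
  linarith [key x (b uplus), key xplus (b uplus), key x (B.mulVec xplus),
    key xplus (B.mulVec xplus), key x (B.mulVec xdag), key xplus (B.mulVec xdag)]
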